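/- Let (T,R) be a balanced rooted tree, i.e., for every nonempty subset S of the unrooted vertices V(T)∖R, the number e(S) of edges of T with at least one endpoint in S satisfies e(S) ≥ ρ_T·|S|, where ρ_T = e(T)/(v(T)−|R|). Then every graph H that is a union of s labelled copies of T agreeing on R satisfies e(H) ≥ ρ_T·(v(H) − |R|). -/

import Mathlib

lemma ncard_iUnion_fin {β : Type} [Fintype β] {n : ℕ} (E : Fin n → Set β)
    (hdis : ∀ i j, i ≠ j → Disjoint (E i) (E j)) :
    (⋃ i, E i).ncard = ∑ i, (E i).ncard := by
  classical
  have hfin : ∀ i : Fin n, (E i).Finite := fun i => Set.toFinite _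
  have h1 : (⋃ i, E i).ncard = (Finset.univ.biUnion fun i => (hfin i).toFinset).card := by
    rw [Set.ncard_eq_toFinset_card _ (Set.toFinite _)]
    congr 1
    ext x
    simp [Set.Finite.mem_toFinset]
  rw [h1, Finset.card_biUnion]
  · exact Finset.sum_congr rfl fun i _ => by
      rw [Set.ncard_eq_toFinset_card _ (hfin i)]
  · intro i _ j _ hij
    rw [Function.onFun, Set.Finite.disjoint_toFinset]; exact hdis i j hij

lemma sum_ncard_le {β : Type} [Fintype β] {n : ℕ} (E : Fin n → Set β) (A : Set β)
    (hsub : ∀ i, E i ⊆ A) (hdis : ∀ i j, i ≠ j → Disjoint (E i) (E j)) :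
    ∑ i, (E i).ncard ≤ A.ncard := by
  rw [← ncard_iUnion_fin E hdis]
  exact Set.ncard_le_ncard (Set.iUnion_subset hsub) (Set.toFinite _)

/-- `eCount G S` is the number of edges of `G` with at least one endpoint in `S`. -/
noncomputable def eCount {V : Type} (G : SimpleGraph V) (S : Set V) : ℕ :=
  {e ∈ G.edgeSet | ∃ v ∈ S, v ∈ e}.ncard

/-- If `(T,R)` is a balanced rooted tree (every nonempty set `S` of unrooted vertices
satisfies `e(S) ≥ ρ_T·|S|` with `ρ_T = e(T)/(v(T)-|R|)`), then every graph `H` which is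
a union of `s` distinct labelled copies of `T` agreeing on `R` satisfies
`e(H) ≥ ρ_T · (v(H) - |R|)`. -/
theorem stmt_4 {α W : Type} [Fintype α] [Fintype W]
    (T : SimpleGraph α) (hT : T.IsTree)
    (R : Finset α) (hRind : ∀ u ∈ R, ∀ v ∈ R, ¬ T.Adj u v)
    (hBal : ∀ S : Set α, S ⊆ {v | v ∉ R} → S.Nonempty →
      (eCount T S : ℝ) ≥
        ((T.edgeSet.ncard : ℝ) / ((Fintype.card α : ℝ) - (R.card : ℝ))) * S.ncard)
    (s : ℕ) (hs : 0 < s)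
    (H : SimpleGraph W) (F : Fin s → (α → W))
    (hcopy : ∀ i, Function.Injective (F i) ∧
      ∀ a b, T.Adj a b → H.Adj (F i a) (F i b))
    (hdist : ∀ i j, i ≠ j → F i ≠ F j)
    (hagree : ∀ i j, ∀ r ∈ R, F i r = F j r)
    (hvert : ∀ w : W, ∃ i a, F i a = w)
    (hedge : ∀ w w' : W, H.Adj w w' ↔
      ∃ i a b, T.Adj a b ∧ F i a = w ∧ F i b = w') :
    (H.edgeSet.ncard : ℝ) ≥
      ((T.edgeSet.ncard : ℝ) / ((Fintype.card α : ℝ) - (R.card : ℝ))) *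
        ((Fintype.card W : ℝ) - (R.card : ℝ)) := by
  classical
  set ρ : ℝ := (T.edgeSet.ncard : ℝ) / ((Fintype.card α : ℝ) - (R.card : ℝ)) with hρ
  have i0 : Fin s := ⟨0, hs⟩
  set Img : Fin s → Set W := fun i => Set.range (F i) with hImg
  set RW : Set W := F i0 '' ↑R with hRWdef
  set N : Fin s → Set W := fun i => Img i \ (RW ∪ ⋃ j, ⋃ (_ : j < i), Img j) with hNdef
  -- pairwise disjointness of the N i
  have hNdis : ∀ i j : Fin s, i ≠ j → Disjoint (N i) (N j) := by
    intro i j hij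
    rcases hij.lt_or_gt with h | h
    · refine Set.disjoint_left.mpr fun w hwi hwj => ?_
      exact hwj.2 (Or.inr (Set.mem_iUnion₂.mpr ⟨i, h, hwi.1⟩))
    · refine Set.disjoint_left.mpr fun w hwi hwj => ?_
      exact hwi.2 (Or.inr (Set.mem_iUnion₂.mpr ⟨j, h, hwj.1⟩))
  -- the N i cover the complement of the root image
  have hNcover : (⋃ i, N i) = RWᶜ := by
    ext w
    simp only [Set.mem_iUnion, Set.mem_compl_iff]
    constructor
    · rintro ⟨i, hw⟩ hwRW; exact hw.2 (Or.inl hwRW)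
    · intro hwRW
      have hex : ∃ i : Fin s, w ∈ Img i := by
        obtain ⟨i, a, ha⟩ := hvert w; exact ⟨i, ⟨a, ha⟩⟩
      set Q : Finset (Fin s) := Finset.univ.filter (fun i => w ∈ Img i) with hQ
      have hQne : Q.Nonempty := ⟨hex.choose, by simp [hQ, hex.choose_spec]⟩
      refine ⟨Q.min' hQne, ?_, ?_⟩
      · have := Q.min'_mem hQne
        simpa [hQ] using this
      · rintro (h | h)
        · exact hwRW h
        · obtain ⟨j, hj, hwj⟩ := Set.mem_iUnion₂.mp h
          have hjQ : j ∈ Q := by simp [hQ, hwj]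
          exact absurd (Q.min'_le j hjQ) (not_le.mpr hj)
  have hRWcard : RW.ncard = R.card := by
    rw [hRWdef, Set.ncard_image_of_injective _ (hcopy i0).1, Set.ncard_coe_finset]
  have hsumN : ∑ i, (N i).ncard + R.card = Fintype.card W := by
    rw [← ncard_iUnion_fin N hNdis, hNcover, ← hRWcard]
    have h := Set.ncard_add_ncard_compl RW (Set.toFinite _) (Set.toFinite _)
    rw [Nat.card_eq_fintype_card] at h
    omega
  -- the preimage sets
  have hNsubImg : ∀ i, N i ⊆ Set.range (F i) := fun i w hw => hw.1
  have hScard : ∀ i, (F i ⁻¹' N i).ncard = (N i).ncard := by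
    intro i
    have himg : F i '' (F i ⁻¹' N i) = N i :=
      Set.image_preimage_eq_of_subset (hNsubImg i)
    have h2 := Set.ncard_image_of_injective (F i ⁻¹' N i) (hcopy i).1
    rw [himg] at h2; exact h2.symm
  have hSsub : ∀ i, (F i ⁻¹' N i) ⊆ {v | v ∉ R} := by
    intro i a ha haR
    have : F i a ∈ RW := ⟨a, haR, (hagree i i0 a haR).symm⟩
    exact ha.2 (Or.inl this)
  have hper : ∀ i, (eCount T (F i ⁻¹' N i) : ℝ) ≥ ρ * ((N i).ncard : ℝ) := by
    intro i
    by_cases hSne : (F i ⁻¹' N i).Nonempty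
    · have h := hBal _ (hSsub i) hSne
      rwa [hScard i] at h
    · rw [Set.not_nonempty_iff_eq_empty] at hSne
      have hNem : N i = ∅ := by
        have h := Set.image_preimage_eq_of_subset (hNsubImg i)
        rw [hSne, Set.image_empty] at h; exact h.symm
      have : eCount T (F i ⁻¹' N i) = 0 := by
        simp [eCount, hSne, Set.sep_eq_empty_iff_mem_false]
      rw [this, hNem]
      simp
  -- edge sets
  set E : Fin s → Set (Sym2 W) :=
    fun i => Sym2.map (F i) '' {e ∈ T.edgeSet | ∃ a ∈ F i ⁻¹' N i, a ∈ e} with hEdef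
  have hEsub : ∀ i, E i ⊆ H.edgeSet := by
    rintro i e ⟨e', ⟨he', -⟩, rfl⟩
    induction e' using Sym2.ind with
    | _ a b =>
      rw [Sym2.map_pair_eq, SimpleGraph.mem_edgeSet]
      exact (hcopy i).2 a b (T.mem_edgeSet.mp he')
  have hEcard : ∀ i, (E i).ncard = eCount T (F i ⁻¹' N i) := by
    intro i
    rw [hEdef]
    exact Set.ncard_image_of_injective _ (Sym2.map.injective (hcopy i).1)
  have key : ∀ i j : Fin s, i < j → Disjoint (E i) (E j) := by
    intro i j hij
    rw [Set.disjoint_left]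
    rintro e ⟨ei, ⟨-, -⟩, rfl⟩ ⟨ej, ⟨-, a, ha, hae⟩, hej⟩
    have h1 : F j a ∈ Sym2.map (F i) ei := by
      rw [← hej]; exact Sym2.mem_map.mpr ⟨a, hae, rfl⟩
    obtain ⟨b, -, hb⟩ := Sym2.mem_map.mp h1
    exact ha.2 (Or.inr (Set.mem_iUnion₂.mpr ⟨i, hij, ⟨b, hb⟩⟩))
  have hEdis : ∀ i j : Fin s, i ≠ j → Disjoint (E i) (E j) := by
    intro i j hij
    rcases hij.lt_or_gt with h | h
    · exact key i j h
    · exact (key j i h).symm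
  have hsumE : ∑ i, (E i).ncard ≤ H.edgeSet.ncard := sum_ncard_le E _ hEsub hEdis
  have hreal : (∑ i, ((N i).ncard : ℝ)) = (Fintype.card W : ℝ) - (R.card : ℝ) := by
    have : ((∑ i, (N i).ncard : ℕ) : ℝ) + (R.card : ℝ) = (Fintype.card W : ℝ) := by
      exact_mod_cast congrArg (Nat.cast : ℕ → ℝ) hsumN
    push_cast at this
    linarith
  calc (H.edgeSet.ncard : ℝ) ≥ ∑ i, ((E i).ncard : ℝ) := by exact_mod_cast hsumE
    _ = ∑ i, (eCount T (F i ⁻¹' N i) : ℝ) := by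
        exact Finset.sum_congr rfl fun i _ => by rw [hEcard i]
    _ ≥ ∑ i, ρ * ((N i).ncard : ℝ) := Finset.sum_le_sum fun i _ => hper i
    _ = ρ * ∑ i, ((N i).ncard : ℝ) := by rw [Finset.mul_sum]
    _ = ρ * ((Fintype.card W : ℝ) - (R.card : ℝ)) := by rw [hreal]
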